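/- (Phillips) For every effective transition system T there exists a boundedly branching computable transition system T′ (indeed one with branching degree bounded by 2) such that T and T′ are branching bisimilar. -/

import Mathlib

namespace RTMPaper

/-! ## Labelled transition systems

An `A`-labelled transition system; transition labels are drawn from `Option A`,
where `none` plays the role of the unobservable action τ. -/

structure LTS (A : Type) where
  State : Type
  tr : State → Option A → State → Prop
  init : State
  final : Set State

namespace LTS

variable {A : Type}

/-- A τ-step. -/
def tauStep (T : LTS A) (s t : T.State) : Prop := T.tr s none t

/-- `⇒` : the reflexive–transitive closure of τ-steps. -/
def tauReach (T : LTS A) : T.State → T.State → Prop :=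
  Relation.ReflTransGen T.tauStep

/-- `s —(a)→ t` : either `s —a→ t`, or `a = τ` and `s = t`. -/
def optStep (T : LTS A) (s : T.State) (a : Option A) (t : T.State) : Prop :=
  T.tr s a t ∨ (a = none ∧ s = t)

/-- The set of outgoing transitions of a state. -/
def out (T : LTS A) (s : T.State) : Set (Option A × T.State) :=
  {p | T.tr s p.1 p.2}

def FinitelyBranching (T : LTS A) : Prop := ∀ s, (T.out s).Finite

/-- The branching degree of `T` is bounded by `B`. -/
def BranchingDegreeBoundedBy (T : LTS A) (B : ℕ) : Prop :=
  ∀ s, (T.out s).Finite ∧ (T.out s).ncard ≤ B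

def BoundedlyBranching (T : LTS A) : Prop := ∃ B, T.BranchingDegreeBoundedBy B

/-- A deterministic transition system. -/
def Deterministic (T : LTS A) : Prop :=
  (∀ s a t₁ t₂, T.tr s a t₁ → T.tr s a t₂ → t₁ = t₂) ∧
  (∀ s t, T.tr s none t → ∀ a u, T.tr s a u → a = none)

/-- Relabelling of an LTS along a map of action alphabets (τ is mapped to τ). -/
def relabel {A' : Type} (f : A → A') (T : LTS A) : LTS A' where
  State := T.State
  tr s a t := ∃ a₀ : Option A, T.tr s a₀ t ∧ a = Option.map f a₀
  init := T.init
  final := T.final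

end LTS

/-! ## (Divergence-preserving) branching bisimilarity -/

structure IsBranchingBisimulation {A : Type} (T₁ T₂ : LTS A)
    (R : T₁.State → T₂.State → Prop) : Prop where
  fwd : ∀ s₁ s₂ a s₁', R s₁ s₂ → T₁.tr s₁ a s₁' →
    ∃ s₂'' s₂', T₂.tauReach s₂ s₂'' ∧ T₂.optStep s₂'' a s₂' ∧ R s₁ s₂'' ∧ R s₁' s₂'
  bwd : ∀ s₁ s₂ a s₂', R s₁ s₂ → T₂.tr s₂ a s₂' →
    ∃ s₁'' s₁', T₁.tauReach s₁ s₁'' ∧ T₁.optStep s₁'' a s₁' ∧ R s₁'' s₂ ∧ R s₁' s₂'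
  finFwd : ∀ s₁ s₂, R s₁ s₂ → s₁ ∈ T₁.final →
    ∃ s₂', T₂.tauReach s₂ s₂' ∧ R s₁ s₂' ∧ s₂' ∈ T₂.final
  finBwd : ∀ s₁ s₂, R s₁ s₂ → s₂ ∈ T₂.final →
    ∃ s₁', T₁.tauReach s₁ s₁' ∧ R s₁' s₂ ∧ s₁' ∈ T₁.final

/-- The divergence-preservation conditions on a branching bisimulation. -/
def DivergencePreserving {A : Type} (T₁ T₂ : LTS A)
    (R : T₁.State → T₂.State → Prop) : Prop :=
  (∀ (s₂ : T₂.State) (f : ℕ → T₁.State),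
      (∀ i, T₁.tauStep (f i) (f (i + 1))) → (∀ i, R (f i) s₂) →
      ∃ s₂', Relation.TransGen T₂.tauStep s₂ s₂' ∧ ∃ i, R (f i) s₂') ∧
  (∀ (s₁ : T₁.State) (f : ℕ → T₂.State),
      (∀ i, T₂.tauStep (f i) (f (i + 1))) → (∀ i, R s₁ (f i)) →
      ∃ s₁', Relation.TransGen T₁.tauStep s₁ s₁' ∧ ∃ i, R s₁' (f i))

/-- `T₁ ≈b T₂` : branching bisimilarity. -/
def BranchingBisimilar {A : Type} (T₁ T₂ : LTS A) : Prop :=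
  ∃ R, IsBranchingBisimulation T₁ T₂ R ∧ R T₁.init T₂.init

/-- `T₁ ≈Δb T₂` : divergence-preserving branching bisimilarity. -/
def DPBranchingBisimilar {A : Type} (T₁ T₂ : LTS A) : Prop :=
  ∃ R, IsBranchingBisimulation T₁ T₂ R ∧ DivergencePreserving T₁ T₂ R ∧
    R T₁.init T₂.init

/-! ## Effective and computable transition systems -/

/-- A set of natural numbers is recursively enumerable. -/
def REset (X : Set ℕ) : Prop :=
  ∃ f : ℕ →. Unit, Partrec f ∧ ∀ n, (f n).Dom ↔ n ∈ X

/-- A (finitely branching) LTS is computable if, with respect to some injective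
codings of its labels and states into ℕ, the functions `out` and `fin` are
recursive. -/
def LTS.IsComputable {A : Type} (T : LTS A) : Prop :=
  ∃ hfb : ∀ s, (T.out s).Finite,
    ∃ (cL : Option A → ℕ) (cS : T.State → ℕ),
      Function.Injective cL ∧ Function.Injective cS ∧
      (∃ fo : ℕ → ℕ, Computable fo ∧ ∀ s,
        fo (cS s) =
          Encodable.encode
            (((hfb s).toFinset).image fun p => Nat.pair (cL p.1) (cS p.2))) ∧
      (∃ ff : ℕ → ℕ, Computable ff ∧ ∀ s,
        (s ∈ T.final → ff (cS s) = 1) ∧ (s ∉ T.final → ff (cS s) = 0))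

/-- A (finitely branching) LTS is effective if, with respect to some injective
codings of its labels and states into ℕ, its transition relation and its set of
final states are recursively enumerable. -/
def LTS.IsEffective {A : Type} (T : LTS A) : Prop :=
  T.FinitelyBranching ∧
  ∃ (cL : Option A → ℕ) (cS : T.State → ℕ),
    Function.Injective cL ∧ Function.Injective cS ∧
    REset {n | ∃ s a t, T.tr s a t ∧ n = Nat.pair (cS s) (Nat.pair (cL a) (cS t))} ∧
    REset {n | ∃ s ∈ T.final, n = cS s}

/-! ## Reactive Turing machines -/

inductive Move : Type
  | L | R
deriving DecidableEq

instance instFintypeMove : Fintype Move :=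
  ⟨{Move.L, Move.R}, fun x => by cases x <;> simp⟩

/-- A tape instance: the content left of the head (nearest symbol first), the
symbol under the head, and the content right of the head (nearest symbol
first).  Tape symbols are `Option D`, with `none` the blank symbol □. -/
structure Tape (D : Type) where
  left : List (Option D)
  head : Option D
  right : List (Option D)

def Tape.empty (D : Type) : Tape D := ⟨[], none, []⟩

/-- Write `e` at the head position and move the head in direction `m`. -/
def Tape.writeMove {D : Type} (t : Tape D) (e : Option D) : Move → Tape D
  | .L =>
    match t.left with
    | [] => ⟨[], none, e :: t.right⟩
    | x :: l => ⟨l, x, e :: t.right⟩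
  | .R =>
    match t.right with
    | [] => ⟨e :: t.left, none, []⟩
    | x :: r => ⟨e :: t.left, x, r⟩

/-- A reactive Turing machine with action symbols `A` (labels `Option A`,
`none` being τ) and data symbols `D` (tape symbols `Option D`, `none` being
the blank symbol). -/
structure RTM (A D : Type) where
  Q : Type
  [instQ : Fintype Q]
  trans : Q → Option D → Option A → Option D → Move → Q → Prop
  init : Q
  final : Set Q

attribute [instance] RTM.instQ

/-- The transition system `T(M)` associated with an RTM `M`. -/
def RTM.lts {A D : Type} (M : RTM A D) : LTS A where
  State := M.Q × Tape D
  tr c a c' := ∃ e m, M.trans c.1 c.2.head a e m c'.1 ∧ c'.2 = c.2.writeMove e m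
  init := (M.init, Tape.empty D)
  final := {c | c.1 ∈ M.final}

def RTM.Deterministic {A D : Type} (M : RTM A D) : Prop :=
  (∀ s d a e₁ m₁ t₁ e₂ m₂ t₂, M.trans s d a e₁ m₁ t₁ → M.trans s d a e₂ m₂ t₂ →
      e₁ = e₂ ∧ m₁ = m₂ ∧ t₁ = t₂) ∧
  (∀ s d e₁ m₁ t₁, M.trans s d none e₁ m₁ t₁ →
      ∀ a e₂ m₂ t₂, M.trans s d a e₂ m₂ t₂ → a = none)

/-! ## Actions over channels, and parallel composition -/

/-- Actions over a set `C` of channels with communicated values in `V`,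
together with further (base) actions from `B`:  `recv c v` is `c?v`,
`send c v` is `c!v`. -/
inductive CAct (C V B : Type) : Type
  | recv : C → V → CAct C V B
  | send : C → V → CAct C V B
  | base : B → CAct C V B
deriving DecidableEq

/-- The (possibly silent) action `a` is a communication action on one of the
channels in `C'`. -/
def IsComm {C V B : Type} (C' : Set C) : Option (CAct C V B) → Prop
  | some (.recv c _) => c ∈ C'
  | some (.send c _) => c ∈ C'
  | _ => False

/-- Parallel composition `[T₁ ∥ T₂]_{C'}` of transition systems, enforcing
communication on the channels in `C'`. -/
def parLTS {C V B : Type} (C' : Set C) (T₁ T₂ : LTS (CAct C V B)) :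
    LTS (CAct C V B) where
  State := T₁.State × T₂.State
  init := (T₁.init, T₂.init)
  final := {p | p.1 ∈ T₁.final ∧ p.2 ∈ T₂.final}
  tr p a p' :=
    ¬ IsComm C' a ∧
    ((T₁.tr p.1 a p'.1 ∧ p.2 = p'.2) ∨
     (T₂.tr p.2 a p'.2 ∧ p.1 = p'.1) ∨
     (a = none ∧ ∃ c ∈ C', ∃ d : V,
        (T₁.tr p.1 (some (.send c d)) p'.1 ∧ T₂.tr p.2 (some (.recv c d)) p'.2) ∨
        (T₁.tr p.1 (some (.recv c d)) p'.1 ∧ T₂.tr p.2 (some (.send c d)) p'.2)))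

/-- The behaviour of `sender(M)`: output the symbols of `w` one by one along
channel `cu`, then halt in a final state. -/
def outputLTS {C V B : Type} (cu : C) (w : List V) : LTS (CAct C V B) where
  State := List V
  tr s a t := ∃ d, s = d :: t ∧ a = some (.send cu d)
  init := w
  final := {([] : List V)}

/-- A concrete (syntactic, Gödel-numberable) presentation of a reactive Turing
machine: states are `Fin (n+1)`, and the transition relation is a finite set of
tuples. -/
structure RTMc (A D : Type) where
  n : ℕ
  trans : Finset (Fin (n + 1) × Option D × Option A × Option D × Move × Fin (n + 1))
  init : Fin (n + 1)
  final : Finset (Fin (n + 1))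

def RTMc.toRTM {A D : Type} (M : RTMc A D) : RTM A D where
  Q := Fin (M.n + 1)
  trans s d a e m t := (s, d, a, e, m, t) ∈ M.trans
  init := M.init
  final := (↑M.final : Set (Fin (M.n + 1)))

end RTMPaper


namespace RTMPaper
section PhillipsAux

open Encodable Nat.Partrec.Code
open Nat.Partrec (Code)

open private enle from Mathlib.Logic.Equiv.Multiset

private lemma enc_ms (m : Multiset ℕ) : encode m = encode (m.sort (· ≤ ·)) := by
  show encodeMultiset m = _
  unfold encodeMultiset
  congr 1

private lemma enc_fs (F : Finset ℕ) : encode F = encode (F.sort (· ≤ ·)) := by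
  have h : encode F = encode F.val := rfl
  rw [h, enc_ms]; rfl

private lemma encF1 (e : ℕ) : encode ({e} : Finset ℕ) = Nat.pair e 0 + 1 := by
  rw [enc_fs, Finset.sort_singleton, encode_list_cons, encode_list_nil]
  rfl

private lemma encF2 (e₁ e₂ : ℕ) (h : e₁ < e₂) :
    encode ({e₁, e₂} : Finset ℕ) = Nat.pair e₁ (Nat.pair e₂ 0 + 1) + 1 := by
  rw [enc_fs]
  have hs : ({e₁, e₂} : Finset ℕ).sort (· ≤ ·) = [e₁, e₂] := by
    rw [Finset.sort_insert]
    · rw [Finset.sort_singleton]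
    · intro b hb; simp only [Finset.mem_singleton] at hb; subst hb; exact h.le
    · simp [h.ne]
  rw [hs, encode_list_cons, encode_list_cons, encode_list_nil]
  rfl

private lemma encodePair (e₁ e₂ : ℕ) (hne : e₁ ≠ e₂) :
    encode ({e₁, e₂} : Finset ℕ) =
      if e₁ < e₂ then Nat.pair e₁ (Nat.pair e₂ 0 + 1) + 1
      else Nat.pair e₂ (Nat.pair e₁ 0 + 1) + 1 := by
  rcases lt_or_gt_of_ne hne with h | h
  · rw [if_pos h, encF2 _ _ h]
  · rw [if_neg (not_lt.2 h.le), Finset.pair_comm, encF2 _ _ h]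

private lemma REset_exists_code {X : Set ℕ} (h : REset X) :
    ∃ c : Code, ∀ n, n ∈ X ↔ ∃ k, (evaln k c n).isSome = true := by
  obtain ⟨f, hf, hdom⟩ := h
  have hg : Partrec (fun n => (f n).map fun _ => 0) :=
    hf.map (Computable.const 0).to₂
  obtain ⟨c, hc⟩ := Nat.Partrec.Code.exists_code.1 (Partrec.nat_iff.1 hg)
  refine ⟨c, fun n => ?_⟩
  rw [← hdom n]
  have hdom2 : (eval c n).Dom ↔ (f n).Dom := by rw [hc]; exact Iff.rfl
  rw [← hdom2]
  constructor
  · intro hd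
    obtain ⟨x, hx⟩ := Part.dom_iff_mem.1 hd
    obtain ⟨k, hk⟩ := evaln_complete.1 hx
    exact ⟨k, Option.isSome_iff_exists.2 ⟨x, hk⟩⟩
  · rintro ⟨k, hk⟩
    obtain ⟨x, hx⟩ := Option.isSome_iff_exists.1 hk
    exact Part.dom_iff_mem.2 ⟨x, evaln_sound (Option.mem_def.2 hx)⟩

variable {A : Type}

/-- The Phillips construction. -/
private def pLTS (T : LTS A) (cL : Option A → ℕ) (cS : T.State → ℕ)
    (c c' : Code) : LTS A where
  State := T.State × ℕ
  tr p a q :=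
    (a = none ∧ q = (p.1, p.2 + 1)) ∨
    (T.tr p.1 a q.1 ∧ q.2 = 0 ∧
      (evaln p.2.unpair.2 c p.2.unpair.1).isSome = true ∧
      p.2.unpair.1 = Nat.pair (cS p.1) (Nat.pair (cL a) (cS q.1)))
  init := (T.init, 0)
  final := {p | (evaln p.2 c' (cS p.1)).isSome = true}

private lemma pLTS_out (T : LTS A) (cL : Option A → ℕ) (cS : T.State → ℕ)
    (c c' : Code) (s : T.State) (n : ℕ) :
    (pLTS T cL cS c c').out (s, n) =
      insert ((none : Option A), ((s, n + 1) : T.State × ℕ))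
        {q : Option A × (T.State × ℕ) | T.tr s q.1 q.2.1 ∧ q.2.2 = 0 ∧
          (evaln n.unpair.2 c n.unpair.1).isSome = true ∧
          n.unpair.1 = Nat.pair (cS s) (Nat.pair (cL q.1) (cS q.2.1))} := by
  ext ⟨a, t, k⟩
  simp only [LTS.out, pLTS, Set.mem_setOf_eq, Set.mem_insert_iff, Prod.ext_iff,
    Prod.mk.injEq]
  change (_ ∨ _) ↔ (a, t, k) = _ ∨ _
  simp only [Prod.ext_iff]
  exact Iff.rfl

private def foAux (cln : ℕ) (c : Code) (m₀ : ℕ) : ℕ :=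
  if (evaln m₀.unpair.2.unpair.2 c m₀.unpair.2.unpair.1).isSome = true ∧
      m₀.unpair.2.unpair.1.unpair.1 = m₀.unpair.1 then
    if Nat.pair cln (Nat.pair m₀.unpair.1 (m₀.unpair.2 + 1)) <
        Nat.pair m₀.unpair.2.unpair.1.unpair.2.unpair.1
          (Nat.pair m₀.unpair.2.unpair.1.unpair.2.unpair.2 0) then
      Nat.pair (Nat.pair cln (Nat.pair m₀.unpair.1 (m₀.unpair.2 + 1)))
        (Nat.pair (Nat.pair m₀.unpair.2.unpair.1.unpair.2.unpair.1
          (Nat.pair m₀.unpair.2.unpair.1.unpair.2.unpair.2 0)) 0 + 1) + 1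
    else
      Nat.pair (Nat.pair m₀.unpair.2.unpair.1.unpair.2.unpair.1
          (Nat.pair m₀.unpair.2.unpair.1.unpair.2.unpair.2 0))
        (Nat.pair (Nat.pair cln (Nat.pair m₀.unpair.1 (m₀.unpair.2 + 1))) 0 + 1) + 1
  else Nat.pair (Nat.pair cln (Nat.pair m₀.unpair.1 (m₀.unpair.2 + 1))) 0 + 1

private lemma foAux_primrec (cln : ℕ) (c : Code) : Primrec (foAux cln c) := by
  have hx : Primrec fun m₀ : ℕ => m₀.unpair.1 := Primrec.fst.comp Primrec.unpair
  have hn : Primrec fun m₀ : ℕ => m₀.unpair.2 := Primrec.snd.comp Primrec.unpair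
  have hm : Primrec fun m₀ : ℕ => m₀.unpair.2.unpair.1 :=
    Primrec.fst.comp (Primrec.unpair.comp hn)
  have hj : Primrec fun m₀ : ℕ => m₀.unpair.2.unpair.2 :=
    Primrec.snd.comp (Primrec.unpair.comp hn)
  have hm2 : Primrec fun m₀ : ℕ => m₀.unpair.2.unpair.1.unpair.2 :=
    Primrec.snd.comp (Primrec.unpair.comp hm)
  have he1 : Primrec fun m₀ : ℕ => Nat.pair cln (Nat.pair m₀.unpair.1 (m₀.unpair.2 + 1)) :=
    Primrec₂.natPair.comp (Primrec.const cln)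
      (Primrec₂.natPair.comp hx (Primrec.succ.comp hn))
  have he2 : Primrec fun m₀ : ℕ => Nat.pair m₀.unpair.2.unpair.1.unpair.2.unpair.1
      (Nat.pair m₀.unpair.2.unpair.1.unpair.2.unpair.2 0) :=
    Primrec₂.natPair.comp (Primrec.fst.comp (Primrec.unpair.comp hm2))
      (Primrec₂.natPair.comp (Primrec.snd.comp (Primrec.unpair.comp hm2))
        (Primrec.const 0))
  have heval : Primrec fun m₀ : ℕ =>
      evaln m₀.unpair.2.unpair.2 c m₀.unpair.2.unpair.1 :=
    Nat.Partrec.Code.primrec_evaln.comp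
      (Primrec.pair (Primrec.pair hj (Primrec.const c)) hm)
  have hcond : PrimrecPred fun m₀ : ℕ =>
      (evaln m₀.unpair.2.unpair.2 c m₀.unpair.2.unpair.1).isSome = true ∧
        m₀.unpair.2.unpair.1.unpair.1 = m₀.unpair.1 :=
    PrimrecPred.and
      (Primrec.eq.comp (Primrec.option_isSome.comp heval) (Primrec.const true))
      (Primrec.eq.comp (Primrec.fst.comp (Primrec.unpair.comp hm)) hx)
  exact Primrec.ite hcond
    (Primrec.ite (Primrec.nat_lt.comp he1 he2)
      (Primrec.succ.comp (Primrec₂.natPair.comp he1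
        (Primrec.succ.comp (Primrec₂.natPair.comp he2 (Primrec.const 0)))))
      (Primrec.succ.comp (Primrec₂.natPair.comp he2
        (Primrec.succ.comp (Primrec₂.natPair.comp he1 (Primrec.const 0))))))
    (Primrec.succ.comp (Primrec₂.natPair.comp he1 (Primrec.const 0)))

private def ffAux (c' : Code) (m₀ : ℕ) : ℕ :=
  if (evaln m₀.unpair.2 c' m₀.unpair.1).isSome = true then 1 else 0

private lemma ffAux_primrec (c' : Code) : Primrec (ffAux c') := by
  have hx : Primrec fun m₀ : ℕ => m₀.unpair.1 := Primrec.fst.comp Primrec.unpair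
  have hn : Primrec fun m₀ : ℕ => m₀.unpair.2 := Primrec.snd.comp Primrec.unpair
  have heval : Primrec fun m₀ : ℕ => evaln m₀.unpair.2 c' m₀.unpair.1 :=
    Nat.Partrec.Code.primrec_evaln.comp
      (Primrec.pair (Primrec.pair hn (Primrec.const c')) hx)
  exact Primrec.ite
    (Primrec.eq.comp (Primrec.option_isSome.comp heval) (Primrec.const true))
    (Primrec.const 1) (Primrec.const 0)

end PhillipsAux

open Encodable Nat.Partrec.Code

/-- **Phillips.** Every effective transition system is branching
bisimilar to a computable transition system whose branching degree is bounded
by 2. -/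
theorem effective_bbisim_computable_boundedly_branching
    {A : Type} [Fintype A] (T : LTS A) (hT : T.IsEffective) :
    ∃ T' : LTS A, T'.IsComputable ∧ T'.BranchingDegreeBoundedBy 2 ∧
      BranchingBisimilar T T' := by
  classical
  obtain ⟨hfb, cL, cS, hcL, hcS, hX, hY⟩ := hT
  obtain ⟨c, hc⟩ := REset_exists_code hX
  obtain ⟨c', hc'⟩ := REset_exists_code hY
  set T' : LTS A := pLTS T cL cS c c' with hT'def
  have hup : ∀ (s : T.State) (n n' : ℕ), n ≤ n' →
      Relation.ReflTransGen T'.tauStep (s, n) (s, n') := by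
    intro s n n' h
    induction n', h using Nat.le_induction with
    | base => exact Relation.ReflTransGen.refl
    | succ n'' hn ih => exact ih.tail (Or.inl ⟨rfl, rfl⟩)
  have hsub : ∀ (s : T.State) (n : ℕ), Set.Subsingleton
      {q : Option A × (T.State × ℕ) | T.tr s q.1 q.2.1 ∧ q.2.2 = 0 ∧
        (evaln n.unpair.2 c n.unpair.1).isSome = true ∧
        n.unpair.1 = Nat.pair (cS s) (Nat.pair (cL q.1) (cS q.2.1))} := by
    rintro s n ⟨a₁, t₁, k₁⟩ ⟨-, hk₁, -, hm₁⟩ ⟨a₂, t₂, k₂⟩ ⟨-, hk₂, -, hm₂⟩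
    obtain ⟨-, h⟩ := Nat.pair_eq_pair.1 (hm₁.symm.trans hm₂)
    obtain ⟨hL, hS⟩ := Nat.pair_eq_pair.1 h
    cases hcL hL
    cases hcS hS
    exact Prod.ext rfl (Prod.ext rfl (hk₁.trans hk₂.symm))
  have hdisc : ∀ (s : T.State) (n : ℕ),
      (evaln n.unpair.2 c n.unpair.1).isSome = true → n.unpair.1.unpair.1 = cS s →
      ∃ a t, T.tr s a t ∧
        n.unpair.1 = Nat.pair (cS s) (Nat.pair (cL a) (cS t)) := by
    intro s n h1 h2
    obtain ⟨s', a, t, htr, hm⟩ := (hc n.unpair.1).2 ⟨n.unpair.2, h1⟩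
    have hs' : cS s' = cS s := by rw [hm, Nat.unpair_pair] at h2; exact h2
    obtain rfl := hcS hs'
    exact ⟨a, t, htr, hm⟩
  have hfin' : ∀ p : T'.State, (T'.out p).Finite := by
    rintro ⟨s, n⟩
    have h0 : T'.out (s, n) = _ := pLTS_out T cL cS c c' s n
    rw [h0]
    exact Set.Finite.insert _ (hsub s n).finite
  refine ⟨T', ⟨hfin', cL, (fun p => Nat.pair (cS p.1) p.2), hcL, ?_, ?_, ?_⟩,
    ?_, ?_⟩
  · -- injectivity of the state coding
    rintro ⟨s₁, n₁⟩ ⟨s₂, n₂⟩ h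
    obtain ⟨h1, h2⟩ := Nat.pair_eq_pair.1 h
    exact Prod.ext (hcS h1) h2
  · -- computability of out
    refine ⟨foAux (cL none) c, (foAux_primrec _ _).to_comp, ?_⟩
    rintro ⟨s, n⟩
    by_cases hcnd : (evaln n.unpair.2 c n.unpair.1).isSome = true ∧
        n.unpair.1.unpair.1 = cS s
    · obtain ⟨a, t, htr, hm⟩ := hdisc s n hcnd.1 hcnd.2
      have hSset : {q : Option A × (T.State × ℕ) | T.tr s q.1 q.2.1 ∧ q.2.2 = 0 ∧
          (evaln n.unpair.2 c n.unpair.1).isSome = true ∧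
          n.unpair.1 = Nat.pair (cS s) (Nat.pair (cL q.1) (cS q.2.1))}
          = {(a, (t, 0))} := by
        apply Set.eq_singleton_iff_unique_mem.2
        exact ⟨⟨htr, rfl, hcnd.1, hm⟩, fun q hq => hsub s n hq ⟨htr, rfl, hcnd.1, hm⟩⟩
      have hset : T'.out (s, n) =
          {((none : Option A), ((s, n + 1) : T.State × ℕ)), (a, (t, 0))} := by
        have h0 : T'.out (s, n) = _ := pLTS_out T cL cS c c' s n
        rw [h0, hSset]
        rfl
      have hfinset : (hfin' (s, n)).toFinset.image
          (fun q => Nat.pair (cL q.1) (Nat.pair (cS q.2.1) q.2.2)) =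
          ({Nat.pair (cL none) (Nat.pair (cS s) (n + 1)),
            Nat.pair (cL a) (Nat.pair (cS t) 0)} : Finset ℕ) := by
        ext e
        simp only [Finset.mem_image, Set.Finite.mem_toFinset, hset,
          Set.mem_insert_iff, Set.mem_singleton_iff, Finset.mem_insert,
          Finset.mem_singleton]
        constructor
        · rintro ⟨q, (rfl | rfl), rfl⟩
          · left; rfl
          · right; rfl
        · rintro (rfl | rfl)
          exacts [⟨(none, (s, n + 1)), Or.inl rfl, rfl⟩,
            ⟨(a, (t, 0)), Or.inr rfl, rfl⟩]
      have hne : Nat.pair (cL none) (Nat.pair (cS s) (n + 1)) ≠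
          Nat.pair (cL a) (Nat.pair (cS t) 0) := by
        intro h
        obtain ⟨-, h⟩ := Nat.pair_eq_pair.1 h
        obtain ⟨-, h2⟩ := Nat.pair_eq_pair.1 h
        exact Nat.succ_ne_zero n h2
      rw [hfinset, encodePair _ _ hne]
      unfold foAux
      simp only [Nat.unpair_pair]
      rw [if_pos hcnd, hm]
      simp only [Nat.unpair_pair]
    · have hSset : {q : Option A × (T.State × ℕ) | T.tr s q.1 q.2.1 ∧ q.2.2 = 0 ∧
          (evaln n.unpair.2 c n.unpair.1).isSome = true ∧
          n.unpair.1 = Nat.pair (cS s) (Nat.pair (cL q.1) (cS q.2.1))}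
          = ∅ := by
        ext q
        simp only [Set.mem_setOf_eq, Set.mem_empty_iff_false, iff_false]
        rintro ⟨-, -, h3, h4⟩
        exact hcnd ⟨h3, by rw [h4, Nat.unpair_pair]⟩
      have hset : T'.out (s, n) =
          {((none : Option A), ((s, n + 1) : T.State × ℕ))} := by
        have h0 : T'.out (s, n) = _ := pLTS_out T cL cS c c' s n
        rw [h0, hSset]; simp
        rfl
      have hfinset : (hfin' (s, n)).toFinset.image
          (fun q => Nat.pair (cL q.1) (Nat.pair (cS q.2.1) q.2.2)) =
          ({Nat.pair (cL none) (Nat.pair (cS s) (n + 1))} : Finset ℕ) := by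
        ext e
        simp only [Finset.mem_image, Set.Finite.mem_toFinset, hset,
          Set.mem_singleton_iff, Finset.mem_singleton]
        constructor
        · rintro ⟨q, rfl, rfl⟩; rfl
        · rintro rfl; exact ⟨(none, (s, n + 1)), rfl, rfl⟩
      rw [hfinset, encF1]
      unfold foAux
      simp only [Nat.unpair_pair]
      rw [if_neg hcnd]
  · -- computability of fin
    refine ⟨ffAux c', (ffAux_primrec _).to_comp, ?_⟩
    rintro ⟨s, n⟩
    constructor
    · intro hmem
      show ffAux c' (Nat.pair (cS s) n) = 1
      unfold ffAux
      simp only [Nat.unpair_pair]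
      exact if_pos hmem
    · intro hmem
      show ffAux c' (Nat.pair (cS s) n) = 0
      unfold ffAux
      simp only [Nat.unpair_pair]
      exact if_neg hmem
  · -- branching degree bounded by 2
    rintro ⟨s, n⟩
    refine ⟨hfin' (s, n), ?_⟩
    have h0 : T'.out (s, n) = _ := pLTS_out T cL cS c c' s n
    rw [h0]
    refine le_trans (Set.ncard_insert_le _ _) ?_
    rcases (hsub s n).eq_empty_or_singleton with h | ⟨x, h⟩ <;> rw [h]
    · exact Nat.add_le_add_right (le_trans (le_of_eq (Set.ncard_empty _)) zero_le_one) 1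
    · exact le_of_eq (congrArg (· + 1) (Set.ncard_singleton x))
  · -- branching bisimilarity
    refine ⟨fun s₁ p => s₁ = p.1, ⟨?_, ?_, ?_, ?_⟩, rfl⟩
    · -- fwd
      rintro s₁ ⟨s, n⟩ a s₁' hR htr
      subst hR
      obtain ⟨k, hk⟩ := (hc (Nat.pair (cS s₁) (Nat.pair (cL a) (cS s₁')))).1
        ⟨s₁, a, s₁', htr, rfl⟩
      obtain ⟨x, hx⟩ := Option.isSome_iff_exists.1 hk
      have hk' : (evaln (max k n) c
          (Nat.pair (cS s₁) (Nat.pair (cL a) (cS s₁')))).isSome = true :=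
        Option.isSome_iff_exists.2
          ⟨x, evaln_mono (le_max_left k n) (Option.mem_def.2 hx)⟩
      refine ⟨(s₁, Nat.pair (Nat.pair (cS s₁) (Nat.pair (cL a) (cS s₁'))) (max k n)),
        (s₁', 0), hup _ n _ ?_, Or.inl (Or.inr ⟨htr, rfl, ?_, ?_⟩), rfl, rfl⟩
      · exact le_trans (le_max_right k n) (Nat.right_le_pair _ _)
      · simp only [Nat.unpair_pair]
        exact hk'
      · simp only [Nat.unpair_pair]
    · -- bwd
      rintro s₁ ⟨s, n⟩ a q hR htr'
      subst hR
      rcases htr' with ⟨rfl, rfl⟩ | ⟨htr, -, -⟩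
      · exact ⟨s₁, s₁, Relation.ReflTransGen.refl, Or.inr ⟨rfl, rfl⟩, rfl, rfl⟩
      · exact ⟨s₁, q.1, Relation.ReflTransGen.refl, Or.inl htr, rfl, rfl⟩
    · -- finFwd
      rintro s₁ ⟨s, n⟩ hR hfin
      subst hR
      obtain ⟨k, hk⟩ := (hc' (cS s₁)).1 ⟨s₁, hfin, rfl⟩
      obtain ⟨x, hx⟩ := Option.isSome_iff_exists.1 hk
      refine ⟨(s₁, max n k), hup _ _ _ (le_max_left n k), rfl, ?_⟩
      show (evaln (max n k) c' (cS s₁)).isSome = true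
      exact Option.isSome_iff_exists.2
        ⟨x, evaln_mono (le_max_right n k) (Option.mem_def.2 hx)⟩
    · -- finBwd
      rintro s₁ ⟨s, n⟩ hR hfin
      subst hR
      obtain ⟨s', hs', he⟩ := (hc' (cS s₁)).2 ⟨n, hfin⟩
      obtain rfl := hcS he
      exact ⟨s₁, Relation.ReflTransGen.refl, rfl, hs'⟩


end RTMPaper
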